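/- Let μ be a preferential choice function with (μ⊆): μ(X) ⊆ X, (μPR): X ⊆ Y → μ(Y) ∩ X ⊆ μ(X), and (μCUM): μ(X) ⊆ Y ⊆ X → μ(Y) = μ(X). If μ(b) ⊆ d, μ(c) ⊆ b, and μ(c) ∩ d = ∅, then μ(b) ∩ c = ∅. -/
import Mathlib

/-- For a preferential choice function μ with (μ⊆), (μPR) and (μCUM):
if μ(b) ⊆ d, μ(c) ⊆ b and μ(c) ∩ d = ∅, then μ(b) ∩ c = ∅ -- System P forces
"normally b's are not c's", an arrow absent from the inheritance net. -/
theorem stmt8 {U : Type*} (μ : Set U → Set U)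
    (hsub : ∀ X : Set U, μ X ⊆ X)
    (hpr : ∀ X Y : Set U, X ⊆ Y → μ Y ∩ X ⊆ μ X)
    (hcum : ∀ X Y : Set U, μ X ⊆ Y → Y ⊆ X → μ Y = μ X)
    (b c d : Set U)
    (hbd : μ b ⊆ d) (hcb : μ c ⊆ b) (hcd : μ c ∩ d = ∅) :
    μ b ∩ c = ∅ := by
  have hmc : μ c ⊆ b ∩ c := fun x hx => ⟨hcb hx, hsub c hx⟩
  have heq : μ (b ∩ c) = μ c := hcum c (b ∩ c) hmc Set.inter_subset_right
  ext x
  simp only [Set.mem_inter_iff, Set.mem_empty_iff_false, iff_false, not_and]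
  intro hxb hxc
  have hx : x ∈ μ (b ∩ c) :=
    hpr (b ∩ c) b Set.inter_subset_left ⟨hxb, hsub b hxb, hxc⟩
  have : x ∈ μ c ∩ d := ⟨heq ▸ hx, hbd hxb⟩
  simpa [hcd] using this
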